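/- Let X be a T1 regular space. The following are equivalent: (1) CL(X) with the Fell topology is metrizable; (2) CL(X) with the Fell topology is a γ-space; (3) CL(X) with the Fell topology is a D_0-space; (4) K(X) with the Fell topology is a D_0-space; (5) F(X) with the Fell topology is a D_0-space; (6) F_2(X) with the Fell topology is a D_0-space; (7) X is locally compact, separable and metrizable. -/

import Mathlib

open Set TopologicalSpace

universe u v

/-- The Fell topology on the collection of all subsets of `X`, generated by the subbase
consisting of the sets `U⁻ = {H | H ∩ U ≠ ∅}` for `U` open and
`(Kᶜ)⁺ = {H | H ⊆ Kᶜ}` for `K` compact. -/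
def fellTopology (X : Type u) [TopologicalSpace X] : TopologicalSpace (Set X) :=
  TopologicalSpace.generateFrom
    ({S | ∃ U : Set X, IsOpen U ∧ S = {H : Set X | (H ∩ U).Nonempty}} ∪
     {S | ∃ K : Set X, IsCompact K ∧ S = {H : Set X | H ⊆ Kᶜ}})

/-- The Vietoris topology on the collection of all subsets of `X`, generated by the subbase
consisting of the sets `U⁺ = {H | H ⊆ U}` and `U⁻ = {H | H ∩ U ≠ ∅}` for `U` open. -/
def vietorisTopology (X : Type u) [TopologicalSpace X] : TopologicalSpace (Set X) :=
  TopologicalSpace.generateFrom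
    ({S | ∃ U : Set X, IsOpen U ∧ S = {H : Set X | H ⊆ U}} ∪
     {S | ∃ U : Set X, IsOpen U ∧ S = {H : Set X | (H ∩ U).Nonempty}})

/-- A collection `S` of subsets of `X`, viewed as a hyperspace with the Fell topology. -/
def FellHyper (X : Type u) [TopologicalSpace X] (S : Set (Set X)) : Type u :=
  {A : Set X // A ∈ S}

/-- A collection `S` of subsets of `X`, viewed as a hyperspace with the Vietoris topology. -/
def VietorisHyper (X : Type u) [TopologicalSpace X] (S : Set (Set X)) : Type u :=
  {A : Set X // A ∈ S}

instance FellHyper.instTopologicalSpace (X : Type u) [TopologicalSpace X] (S : Set (Set X)) :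
    TopologicalSpace (FellHyper X S) :=
  TopologicalSpace.induced (Subtype.val : {A : Set X // A ∈ S} → Set X) (fellTopology X)

instance VietorisHyper.instTopologicalSpace (X : Type u) [TopologicalSpace X] (S : Set (Set X)) :
    TopologicalSpace (VietorisHyper X S) :=
  TopologicalSpace.induced (Subtype.val : {A : Set X // A ∈ S} → Set X) (vietorisTopology X)

/-- The underlying subset of `X` of a point of a Fell hyperspace. -/
def FellHyper.carrier {X : Type u} [TopologicalSpace X] {S : Set (Set X)}
    (A : FellHyper X S) : Set X :=
  Subtype.val A

/-- The underlying subset of `X` of a point of a Vietoris hyperspace. -/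
def VietorisHyper.carrier {X : Type u} [TopologicalSpace X] {S : Set (Set X)}
    (A : VietorisHyper X S) : Set X :=
  Subtype.val A

/-- `CL(X)`: the nonempty closed subsets of `X`. -/
def CL (X : Type u) [TopologicalSpace X] : Set (Set X) := {A | A.Nonempty ∧ IsClosed A}

/-- `𝒦(X)`: the nonempty compact subsets of `X`. -/
def Kcal (X : Type u) [TopologicalSpace X] : Set (Set X) := {A | A.Nonempty ∧ IsCompact A}

/-- `ℱ(X)`: the nonempty finite subsets of `X`. -/
def Fcal (X : Type u) : Set (Set X) := {A | A.Nonempty ∧ A.Finite}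

/-- `ℱₙ(X)`: the nonempty subsets of `X` with at most `n` points. -/
def Fn (X : Type u) (n : ℕ) : Set (Set X) := {A | A.Nonempty ∧ A.encard ≤ n}

/-- A space is a `D₁`-space if every nonempty closed subset has a countable
neighborhood base. -/
def IsD1Space (Y : Type v) [TopologicalSpace Y] : Prop :=
  ∀ F : Set Y, F.Nonempty → IsClosed F →
    ∃ B : ℕ → Set Y, (∀ n, IsOpen (B n) ∧ F ⊆ B n) ∧
      ∀ V : Set Y, IsOpen V → F ⊆ V → ∃ n, B n ⊆ V

/-- A space is a `D₀`-space if every nonempty compact subset has a countable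
neighborhood base. -/
def IsD0Space (Y : Type v) [TopologicalSpace Y] : Prop :=
  ∀ F : Set Y, F.Nonempty → IsCompact F →
    ∃ B : ℕ → Set Y, (∀ n, IsOpen (B n) ∧ F ⊆ B n) ∧
      ∀ V : Set Y, IsOpen V → F ⊆ V → ∃ n, B n ⊆ V

/-- A space has a `G_δ`-diagonal if the diagonal is a `G_δ`-set in `X × X`. -/
def HasGdeltaDiagonal (X : Type u) [TopologicalSpace X] : Prop :=
  ∃ U : ℕ → Set (X × X), (∀ n, IsOpen (U n)) ∧ (⋂ n, U n) = {p : X × X | p.1 = p.2}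

/-- A space is perfect if every closed subset is a `G_δ`-set. -/
def IsPerfectSpace (Y : Type v) [TopologicalSpace Y] : Prop :=
  ∀ F : Set Y, IsClosed F → ∃ U : ℕ → Set Y, (∀ n, IsOpen (U n)) ∧ F = ⋂ n, U n

/-- A space has the compact-`G_δ` property if every compact subset is a `G_δ`-set. -/
def CompactGDeltaProperty (Y : Type v) [TopologicalSpace Y] : Prop :=
  ∀ K : Set Y, IsCompact K → ∃ U : ℕ → Set Y, (∀ n, IsOpen (U n)) ∧ K = ⋂ n, U n

/-- `γ`-space. -/
def IsGammaSpace (Y : Type v) [TopologicalSpace Y] : Prop :=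
  ∃ g : ℕ → Y → Set Y,
    (∀ n y, IsOpen (g n y) ∧ y ∈ g n y) ∧
    (∀ y, ∀ V : Set Y, IsOpen V → y ∈ V → ∃ n, g n y ⊆ V) ∧
    (∀ n y, ∃ m, ∀ z ∈ g m y, g m z ⊆ g n y)

/-- A space has a `G_δ*`-diagonal if there is a sequence `𝒰 n` of open covers such that
`{x} = ⋂ n, closure (st(x, 𝒰 n))` for every `x`. -/
def HasGdeltaStarDiagonal (X : Type u) [TopologicalSpace X] : Prop :=
  ∃ 𝒰 : ℕ → Set (Set X),
    (∀ n, ∀ U ∈ 𝒰 n, IsOpen U) ∧ (∀ n, ⋃₀ 𝒰 n = univ) ∧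
    ∀ x : X, (⋂ n, closure (⋃₀ {U ∈ 𝒰 n | x ∈ U})) = {x}
section Soft
variable {Y : Type v} [TopologicalSpace Y]

theorem isGammaSpace_of_metrizable [TopologicalSpace.MetrizableSpace Y] : IsGammaSpace Y := by
  letI : MetricSpace Y := TopologicalSpace.metrizableSpaceMetric Y
  refine ⟨fun n y => Metric.ball y ((1/2)^n), ?_, ?_, ?_⟩
  · exact fun n y => ⟨Metric.isOpen_ball, Metric.mem_ball_self (by positivity)⟩
  · intro y V hV hyV
    obtain ⟨ε, hε, hb⟩ := Metric.isOpen_iff.1 hV y hyV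
    obtain ⟨n, hn⟩ := exists_pow_lt_of_lt_one hε (by norm_num : (1:ℝ)/2 < 1)
    exact ⟨n, (Metric.ball_subset_ball hn.le).trans hb⟩
  · intro n y
    refine ⟨n+1, fun z hz w hw => ?_⟩
    have hz' : dist z y < (1/2)^(n+1) := hz
    have hw' : dist w z < (1/2)^(n+1) := hw
    have : dist w y < (1/2)^n := by
      calc dist w y ≤ dist w z + dist z y := dist_triangle _ _ _
      _ < (1/2)^(n+1) + (1/2)^(n+1) := add_lt_add hw' hz'
      _ = (1/2)^n := by ring
    exact this

/-- From a γ-function we can get a monotone γ-function. -/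
theorem IsGammaSpace.mono (h : IsGammaSpace Y) :
    ∃ g : ℕ → Y → Set Y,
      (∀ n y, IsOpen (g n y) ∧ y ∈ g n y) ∧
      (∀ y, ∀ V : Set Y, IsOpen V → y ∈ V → ∃ n, g n y ⊆ V) ∧
      (∀ n y, ∃ m, ∀ z ∈ g m y, g m z ⊆ g n y) ∧
      (∀ m n : ℕ, ∀ y, m ≤ n → g n y ⊆ g m y) := by
  obtain ⟨g, hom, hbase, hγ⟩ := h
  refine ⟨fun n y => ⋂ i ∈ Finset.range (n+1), g i y, ?_, ?_, ?_, ?_⟩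
  · intro n y
    constructor
    · exact isOpen_biInter_finset fun i _ => (hom i y).1
    · exact Set.mem_iInter₂.2 fun i _ => (hom i y).2
  · intro y V hV hyV
    obtain ⟨n, hn⟩ := hbase y V hV hyV
    refine ⟨n, le_trans ?_ hn⟩
    exact Set.biInter_subset_of_mem (Finset.self_mem_range_succ n)
  · intro n y
    choose m hm using fun i => hγ i y
    refine ⟨(Finset.range (n+1)).sup m ⊔ n, fun z hz => ?_⟩
    intro w hw
    refine Set.mem_iInter₂.2 fun i hi => ?_
    have hmi : m i ≤ (Finset.range (n+1)).sup m ⊔ n :=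
      le_trans (Finset.le_sup hi) le_sup_left
    have hz2 : z ∈ g (m i) y := by
      have := Set.mem_iInter₂.1 hz (m i) (Finset.mem_range_succ_iff.2 hmi)
      exact this
    have hw2 : w ∈ g (m i) z := by
      have := Set.mem_iInter₂.1 hw (m i) (Finset.mem_range_succ_iff.2 hmi)
      exact this
    exact hm i z hz2 hw2
  · intro m n y hmn
    intro w hw
    refine Set.mem_iInter₂.2 fun i hi => Set.mem_iInter₂.1 hw i ?_
    exact Finset.mem_range_succ_iff.2 (le_trans (Finset.mem_range_succ_iff.1 hi) hmn)

theorem IsGammaSpace.isD0Space (h : IsGammaSpace Y) : IsD0Space Y := by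
  classical
  obtain ⟨g, hom, hbase, hγ, hmono⟩ := h.mono
  intro F hFne hF
  refine ⟨fun n => ⋃ y ∈ F, g n y, ?_, ?_⟩
  · intro n
    refine ⟨isOpen_biUnion fun y _ => (hom n y).1, fun y hy => Set.mem_biUnion hy (hom n y).2⟩
  · intro V hV hFV
    choose nn hnn using fun y (hy : y ∈ F) => hbase y V hV (hFV hy)
    choose mm hmm using fun y (hy : y ∈ F) => hγ (nn y hy) y
    set m' : Y → ℕ := fun y => if hy : y ∈ F then mm y hy else 0 with hm'
    have hcov : F ⊆ ⋃ y ∈ F, g (m' y) y := fun y hy => Set.mem_biUnion hy (hom _ y).2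
    obtain ⟨t, htF, hfin, hsub⟩ := hF.elim_finite_subcover_image
      (fun y (_ : y ∈ F) => (hom (m' y) y).1) hcov
    obtain ⟨s, hs⟩ := hfin.exists_finset_coe
    refine ⟨s.sup m', ?_⟩
    intro z hz
    obtain ⟨w, hwF, hzw⟩ := Set.mem_iUnion₂.1 hz
    obtain ⟨y, hyt, hwy⟩ := Set.mem_iUnion₂.1 (hsub hwF)
    have hyF : y ∈ F := htF hyt
    have hys : y ∈ s := by rw [← hs] at hyt; exact_mod_cast hyt
    have hle : m' y ≤ s.sup m' := Finset.le_sup hys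
    have hmy : m' y = mm y hyF := by simp [hm', dif_pos hyF]
    rw [hmy] at hwy hle
    have : g (mm y hyF) w ⊆ g (nn y hyF) y := hmm y hyF w hwy
    have hz2 : z ∈ g (mm y hyF) w := hmono _ _ w hle hzw
    exact hnn y hyF (this hz2)

theorem IsD0Space.of_inducing {Z : Type u} [TopologicalSpace Z] {f : Z → Y}
    (hf : Topology.IsInducing f) (h : IsD0Space Y) : IsD0Space Z := by
  intro F hFne hF
  obtain ⟨B, hB1, hB2⟩ := h (f '' F) (hFne.image f) (hF.image hf.continuous)
  refine ⟨fun n => f ⁻¹' B n, fun n => ⟨(hB1 n).1.preimage hf.continuous,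
    fun z hz => Set.mem_preimage.2 ((hB1 n).2 (Set.mem_image_of_mem f hz))⟩, ?_⟩
  intro V hV hFV
  obtain ⟨W, hW, rfl⟩ := hf.isOpen_iff.1 hV
  obtain ⟨n, hn⟩ := hB2 W hW (by rintro _ ⟨z, hz, rfl⟩; exact hFV hz)
  exact ⟨n, fun z hz => hn hz⟩

end Soft
section Hyper
variable {X : Type u} [TopologicalSpace X]

/-- Inclusion map between Fell hyperspaces. -/
def fellIncl {S T : Set (Set X)} (hTS : T ⊆ S) (A : FellHyper X T) : FellHyper X S :=
  ⟨FellHyper.carrier A, hTS A.2⟩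

/-- The inclusion of a smaller Fell hyperspace into a larger one is inducing. -/
theorem fellHyper_incl_inducing {S T : Set (Set X)} (hTS : T ⊆ S) :
    @Topology.IsInducing (FellHyper X T) (FellHyper X S)
      (FellHyper.instTopologicalSpace X T) (FellHyper.instTopologicalSpace X S)
      (fellIncl hTS) := by
  constructor
  show TopologicalSpace.induced _ (fellTopology X) =
    TopologicalSpace.induced _ (TopologicalSpace.induced _ (fellTopology X))
  erw [induced_compose]
  rfl

theorem IsD0Space.fellHyper_mono {S T : Set (Set X)} (hTS : T ⊆ S)
    (h : IsD0Space (FellHyper X S)) : IsD0Space (FellHyper X T) :=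
  h.of_inducing (fellHyper_incl_inducing hTS)

omit [TopologicalSpace X] in
theorem Fn2_subset_Fcal : Fn X 2 ⊆ Fcal X := by
  rintro A ⟨hne, hcard⟩
  exact ⟨hne, Set.finite_of_encard_le_coe hcard⟩

theorem Fcal_subset_Kcal : Fcal X ⊆ Kcal X := by
  rintro A ⟨hne, hfin⟩
  exact ⟨hne, hfin.isCompact⟩

theorem Kcal_subset_CL [T2Space X] : Kcal X ⊆ CL X := by
  rintro A ⟨hne, hcpt⟩
  exact ⟨hne, hcpt.isClosed⟩

end Hyper
open Topology
section FellBasic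
variable {X : Type u} [TopologicalSpace X]

/-- The lower subbasic set `U⁻`. -/
def lminus (U : Set X) : Set (Set X) := {H : Set X | (H ∩ U).Nonempty}

/-- The upper subbasic set `(Kᶜ)⁺`. -/
def uplus (K : Set X) : Set (Set X) := {H : Set X | H ⊆ Kᶜ}

/-- The generating family of the Fell topology. -/
def fellGen (X : Type u) [TopologicalSpace X] : Set (Set (Set X)) :=
  {S | ∃ U : Set X, IsOpen U ∧ S = {H : Set X | (H ∩ U).Nonempty}} ∪
    {S | ∃ K : Set X, IsCompact K ∧ S = {H : Set X | H ⊆ Kᶜ}}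

theorem fellTopology_eq : fellTopology X = TopologicalSpace.generateFrom (fellGen X) := rfl

omit [TopologicalSpace X] in
theorem lminus_injective : Function.Injective (lminus (X := X)) := by
  intro U V h
  ext x
  have := Set.ext_iff.1 h {x}
  simpa [lminus, Set.singleton_inter_nonempty] using this

omit [TopologicalSpace X] in
theorem uplus_injective : Function.Injective (uplus (X := X)) := by
  intro U V h
  ext x
  have := Set.ext_iff.1 h {x}
  simp only [uplus, Set.mem_setOf_eq, Set.singleton_subset_iff, Set.mem_compl_iff] at this
  exact not_iff_not.1 this

theorem fell_isOpen_lminus {U : Set X} (hU : IsOpen U) : IsOpen[fellTopology X] (lminus U) :=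
  TopologicalSpace.GenerateOpen.basic _ (Or.inl ⟨U, hU, rfl⟩)

theorem fell_isOpen_uplus {K : Set X} (hK : IsCompact K) : IsOpen[fellTopology X] (uplus K) :=
  TopologicalSpace.GenerateOpen.basic _ (Or.inr ⟨K, hK, rfl⟩)

/-- Basic open neighborhoods in the Fell topology. -/
def fellBasic (I : Set (Set X)) (K : Set X) : Set (Set X) :=
  {G : Set X | (∀ U ∈ I, (G ∩ U).Nonempty) ∧ G ⊆ Kᶜ}

theorem fellBasic_eq (I : Set (Set X)) (K : Set X) :
    fellBasic I K = (⋂ U ∈ I, lminus U) ∩ uplus K := by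
  ext G
  simp [fellBasic, lminus, uplus]

theorem fell_isOpen_fellBasic {I : Set (Set X)} {K : Set X} (hI : I.Finite)
    (hIo : ∀ U ∈ I, IsOpen U) (hK : IsCompact K) :
    IsOpen[fellTopology X] (fellBasic I K) := by
  letI : TopologicalSpace (Set X) := fellTopology X
  rw [fellBasic_eq]
  exact (hI.isOpen_biInter fun U hU =>
    fell_isOpen_lminus (hIo U hU)).inter (fell_isOpen_uplus hK)

theorem fell_mem_nhds {H : Set X} {t : Set (Set X)} (ht : t ∈ @nhds _ (fellTopology X) H) :
    ∃ (I : Set (Set X)) (K : Set X), I.Finite ∧ (∀ U ∈ I, IsOpen U ∧ (H ∩ U).Nonempty) ∧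
      IsCompact K ∧ H ⊆ Kᶜ ∧ fellBasic I K ⊆ t := by
  letI : TopologicalSpace (Set X) := fellTopology X
  obtain ⟨s, ⟨f, ⟨hfin, hfsub⟩, rfl⟩, hHs, hst⟩ :=
    (TopologicalSpace.isTopologicalBasis_of_subbasis fellTopology_eq).mem_nhds_iff.1 ht
  classical
  refine ⟨{U | IsOpen U ∧ lminus U ∈ f}, ⋃ K ∈ {K : Set X | IsCompact K ∧ uplus K ∈ f}, K,
    ?_, ?_, ?_, ?_, ?_⟩
  · have : {U | IsOpen U ∧ lminus U ∈ f} ⊆ lminus ⁻¹' f := fun U hU => hU.2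
    exact (hfin.preimage lminus_injective.injOn).subset this
  · exact fun U hU => ⟨hU.1, Set.mem_sInter.1 hHs _ hU.2⟩
  · refine Set.Finite.isCompact_biUnion ?_ (fun K hK => hK.1)
    exact (hfin.preimage uplus_injective.injOn).subset fun K hK => hK.2
  · intro x hx
    simp only [Set.mem_compl_iff, Set.mem_iUnion] at *
    rintro ⟨K, ⟨hKc, hKf⟩, hxK⟩
    exact Set.mem_sInter.1 hHs _ hKf hx hxK
  · intro G hG
    refine hst (Set.mem_sInter.2 fun s hs => ?_)
    rcases hfsub hs with ⟨U, hU, rfl⟩ | ⟨K, hK, rfl⟩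
    · exact hG.1 U ⟨hU, hs⟩
    · intro x hxG hxK
      exact hG.2 hxG (Set.mem_iUnion₂.2 ⟨K, ⟨hK, hs⟩, hxK⟩)

end FellBasic
section Metriz
variable {X : Type u} [TopologicalSpace X] [T1Space X] [RegularSpace X]

theorem exists_compact_closure_basis [LocallyCompactSpace X] [SecondCountableTopology X] :
    ∃ B : Set (Set X), B.Countable ∧ TopologicalSpace.IsTopologicalBasis B ∧
      ∀ U ∈ B, IsCompact (closure U) := by
  haveI : T3Space X := ⟨⟩
  obtain ⟨b, hbc, -, hbasis⟩ := TopologicalSpace.exists_countable_basis X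
  refine ⟨{U ∈ b | IsCompact (closure U)}, hbc.mono (Set.sep_subset _ _), ?_, fun U hU => hU.2⟩
  refine TopologicalSpace.isTopologicalBasis_of_isOpen_of_nhds (fun U hU => hbasis.isOpen hU.1) ?_
  intro x V hxV hV
  obtain ⟨K, hKc, hxK, hKV⟩ := exists_compact_subset hV hxV
  obtain ⟨U, hUb, hxU, hUK⟩ := hbasis.exists_subset_of_mem_open hxK isOpen_interior
  refine ⟨U, ⟨hUb, ?_⟩, hxU, (hUK.trans interior_subset).trans hKV⟩
  exact hKc.of_isClosed_subset isClosed_closure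
    ((closure_mono hUK).trans (closure_minimal interior_subset hKc.isClosed))

theorem fellCL_secondCountable [LocallyCompactSpace X] [SecondCountableTopology X] :
    SecondCountableTopology (FellHyper X (CL X)) := by
  haveI : T3Space X := ⟨⟩
  obtain ⟨B, hBc, hBb, hBcl⟩ := exists_compact_closure_basis (X := X)
  classical
  set D : Set (Set X) := {C | ∃ s : Set (Set X), s.Finite ∧ s ⊆ B ∧ C = closure (Set.sUnion s)} with hD
  have hDc : D.Countable := by
    have : D = (fun s => closure (Set.sUnion s)) '' {s | s.Finite ∧ s ⊆ B} := by
      ext C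
      simp only [hD, Set.mem_setOf_eq, Set.mem_image]
      constructor
      · rintro ⟨s, h1, h2, h3⟩; exact ⟨s, ⟨h1, h2⟩, h3.symm⟩
      · rintro ⟨s, ⟨h1, h2⟩, h3⟩; exact ⟨s, h1, h2, h3.symm⟩
    rw [this]
    exact (Set.countable_setOf_finite_subset hBc).image _
  have hDcomp : ∀ C ∈ D, IsCompact C := by
    rintro C ⟨s, hsf, hsB, rfl⟩
    rw [hsf.closure_sUnion]
    exact hsf.isCompact_biUnion fun U hU => hBcl U (hsB hU)
  set G₀ : Set (Set (Set X)) := lminus '' B ∪ uplus '' D with hG₀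
  have hG₀c : G₀.Countable := (hBc.image _).union (hDc.image _)
  set pre := fun (S : Set (Set X)) => (Subtype.val : FellHyper X (CL X) → Set X) ⁻¹' S with hpre
  have key : (FellHyper.instTopologicalSpace X (CL X)) =
      TopologicalSpace.generateFrom (pre '' G₀) := by
    show TopologicalSpace.induced _ (fellTopology X) = _
    erw [fellTopology_eq, induced_generateFrom_eq]
    refine le_antisymm (TopologicalSpace.generateFrom_anti (Set.image_mono ?_))
      (le_generateFrom ?_)
    · rintro S (⟨U, hU, rfl⟩ | ⟨C, hC, rfl⟩)
      · exact Or.inl ⟨U, hBb.isOpen hU, rfl⟩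
      · exact Or.inr ⟨C, hDcomp C hC, rfl⟩
    · rintro _ ⟨S, hS, rfl⟩
      show TopologicalSpace.GenerateOpen (pre '' G₀) (pre S)
      rcases hS with ⟨U, hU, rfl⟩ | ⟨K, hK, rfl⟩
      · have heq : pre {H : Set X | (H ∩ U).Nonempty} =
            Set.sUnion ((fun U₀ => pre (lminus U₀)) '' {U₀ ∈ B | U₀ ⊆ U}) := by
          ext A
          simp only [hpre, Set.mem_preimage, Set.mem_setOf_eq, Set.sUnion_image,
            Set.mem_iUnion, lminus]
          constructor
          · rintro ⟨x, hxA, hxU⟩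
            obtain ⟨U₀, hU₀B, hxU₀, hU₀U⟩ := hBb.exists_subset_of_mem_open hxU hU
            exact ⟨U₀, ⟨hU₀B, hU₀U⟩, x, hxA, hxU₀⟩
          · rintro ⟨U₀, ⟨hU₀B, hU₀U⟩, x, hxA, hxU₀⟩
            exact ⟨x, hxA, hU₀U hxU₀⟩
        rw [heq]
        refine TopologicalSpace.GenerateOpen.sUnion _ ?_
        rintro _ ⟨U₀, hU₀, rfl⟩
        exact .basic _ ⟨lminus U₀, Or.inl ⟨U₀, hU₀.1, rfl⟩, rfl⟩
      · have heq : pre {H : Set X | H ⊆ Kᶜ} =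
            Set.sUnion ((fun C => pre (uplus C)) '' {C ∈ D | K ⊆ C}) := by
          ext A
          simp only [hpre, Set.mem_preimage, Set.mem_setOf_eq, Set.sUnion_image,
            Set.mem_iUnion, uplus]
          constructor
          · intro hAK
            have hcl : IsClosed (A.1 : Set X) := A.2.2
            have hex : ∀ x ∈ K, ∃ U', U' ∈ B ∧ x ∈ U' ∧ closure U' ⊆ (A.1 : Set X)ᶜ := by
              intro x hx
              have hxA : x ∈ (A.1 : Set X)ᶜ := fun hxA => hAK hxA hx
              obtain ⟨Kx, hKxc, hxKx, hKxA⟩ := exists_compact_subset hcl.isOpen_compl hxA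
              obtain ⟨U', hU'B, hxU', hU'K⟩ := hBb.exists_subset_of_mem_open hxKx isOpen_interior
              exact ⟨U', hU'B, hxU',
                ((closure_mono hU'K).trans (closure_minimal interior_subset hKxc.isClosed)).trans
                  hKxA⟩
            choose! uu hu1 hu2 hu3 using hex
            obtain ⟨F, hFK, hFfin, hcov⟩ := hK.elim_finite_subcover_image
              (fun x hx => hBb.isOpen (hu1 x hx)) (fun x hx => Set.mem_biUnion hx (hu2 x hx))
            refine ⟨closure (Set.sUnion (uu '' F)), ⟨⟨uu '' F, hFfin.image _, ?_, rfl⟩, ?_⟩, ?_⟩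
            · rintro _ ⟨x, hxF, rfl⟩; exact hu1 x (hFK hxF)
            · refine hcov.trans (Set.Subset.trans ?_ subset_closure)
              intro y hy
              obtain ⟨x, hxF, hyx⟩ := Set.mem_iUnion₂.1 hy
              exact ⟨uu x, ⟨x, hxF, rfl⟩, hyx⟩
            · rw [(hFfin.image uu).closure_sUnion]
              intro y hyA hyC
              obtain ⟨S', hS', hyS'⟩ := Set.mem_iUnion₂.1 hyC
              obtain ⟨x, hxF, rfl⟩ := hS'
              exact hu3 x (hFK hxF) hyS' hyA
          · rintro ⟨C, ⟨hCD, hKC⟩, hAC⟩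
            exact fun x hxA hxK => hAC hxA (hKC hxK)
        rw [heq]
        refine TopologicalSpace.GenerateOpen.sUnion _ ?_
        rintro _ ⟨C, hC, rfl⟩
        exact .basic _ ⟨uplus C, Or.inr ⟨C, hC.1, rfl⟩, rfl⟩
  refine TopologicalSpace.IsTopologicalBasis.secondCountableTopology
    (TopologicalSpace.isTopologicalBasis_of_subbasis key) ?_
  exact (Set.countable_setOf_finite_subset (hG₀c.image _)).image _
end Metriz
section Reg
variable {X : Type u} [TopologicalSpace X] [T1Space X] [RegularSpace X]

theorem fellCL_regular [LocallyCompactSpace X] : RegularSpace (FellHyper X (CL X)) := by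
  haveI : T3Space X := ⟨⟩
  classical
  letI : TopologicalSpace (Set X) := fellTopology X
  have hval : Continuous (Subtype.val : FellHyper X (CL X) → Set X) := continuous_induced_dom
  refine RegularSpace.of_exists_mem_nhds_isClosed_subset ?_
  intro A s hs
  rw [nhds_induced] at hs
  obtain ⟨t, ht, hts⟩ := hs
  obtain ⟨I, K, hIfin, hIprop, hKc, hHK, hbsub⟩ := fell_mem_nhds ht
  have hAcl : IsClosed (A.1 : Set X) := A.2.2
  have hCex : ∀ U ∈ I, ∃ C : Set X, IsCompact C ∧ ((A.1 : Set X) ∩ interior C).Nonempty ∧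
      C ⊆ U := by
    intro U hU
    obtain ⟨x, hxA, hxU⟩ := (hIprop U hU).2
    obtain ⟨C, hCc, hxC, hCU⟩ := exists_compact_subset (hIprop U hU).1 hxU
    exact ⟨C, hCc, ⟨x, hxA, hxC⟩, hCU⟩
  choose! C hC1 hC2 hC3 using hCex
  have hDex : ∀ x ∈ K, ∃ Dx : Set X, IsCompact Dx ∧ x ∈ interior Dx ∧
      Dx ⊆ ((A.1 : Set X))ᶜ := by
    intro x hx
    exact exists_compact_subset hAcl.isOpen_compl (fun hxA => hHK hxA hx)
  choose! Dm hD1 hD2 hD3 using hDex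
  obtain ⟨F, hFK, hFfin, hKcov⟩ := hKc.elim_finite_subcover_image
    (fun x _ => isOpen_interior) (fun x hx => Set.mem_biUnion hx (hD2 x hx))
  set Dbig : Set X := ⋃ x ∈ F, Dm x with hDbig
  have hDbigc : IsCompact Dbig := hFfin.isCompact_biUnion fun x hx => hD1 x (hFK hx)
  have hKint : K ⊆ interior Dbig := by
    refine hKcov.trans (Set.iUnion₂_subset fun x hx => interior_mono ?_)
    exact Set.subset_biUnion_of_mem hx
  have hDbigA : Dbig ⊆ ((A.1 : Set X))ᶜ := Set.iUnion₂_subset fun x hx => hD3 x (hFK hx)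
  set N : Set (Set X) := (⋂ U ∈ I, lminus (interior (C U))) ∩ uplus Dbig with hN
  have hNopen : IsOpen N :=
    (hIfin.isOpen_biInter fun U _ => fell_isOpen_lminus isOpen_interior).inter
      (fell_isOpen_uplus hDbigc)
  set T : Set (Set X) := (⋂ U ∈ I, lminus (C U)) ∩ uplus (interior Dbig) with hT
  have hTclosed : IsClosed T := by
    rw [← isOpen_compl_iff]
    have hTc : Tᶜ = (⋃ U ∈ I, uplus (C U)) ∪ lminus (interior Dbig) := by
      ext G
      simp only [hT, Set.mem_compl_iff, Set.mem_inter_iff, Set.mem_iInter, not_and_or,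
        not_forall, Set.mem_union, Set.mem_iUnion, lminus, uplus, Set.mem_setOf_eq,
        Set.not_nonempty_iff_eq_empty, ← Set.disjoint_iff_inter_eq_empty,
        ← Set.subset_compl_iff_disjoint_right, Set.not_subset_iff_exists_mem_notMem]
      constructor
      · rintro (⟨U, hU, hGU⟩ | ⟨x, hxG, hxD⟩)
        · exact Or.inl ⟨U, hU, hGU⟩
        · exact Or.inr ⟨x, hxG, not_not.1 hxD⟩
      · rintro (⟨U, hU, hGU⟩ | ⟨x, hxG, hxD⟩)
        · exact Or.inl ⟨U, hU, hGU⟩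
        · exact Or.inr ⟨x, hxG, not_not.2 hxD⟩
    rw [hTc]
    exact (isOpen_biUnion fun U hU => fell_isOpen_uplus (hC1 U hU)).union
      (fell_isOpen_lminus isOpen_interior)
  have hAN : (A.1 : Set X) ∈ N := by
    refine ⟨Set.mem_iInter₂.2 fun U hU => hC2 U hU, fun x hxA hxD => hDbigA hxD hxA⟩
  have hNT : N ⊆ T := by
    rintro G ⟨h1, h2⟩
    refine ⟨Set.mem_iInter₂.2 fun U hU => ?_, fun x hxG hxD => h2 hxG (interior_subset hxD)⟩
    obtain ⟨x, hxG, hxC⟩ := Set.mem_iInter₂.1 h1 U hU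
    exact ⟨x, hxG, interior_subset hxC⟩
  have hTb : T ⊆ fellBasic I K := by
    rintro G ⟨h1, h2⟩
    refine ⟨fun U hU => ?_, fun x hxG hxK => h2 hxG (hKint hxK)⟩
    obtain ⟨x, hxG, hxC⟩ := Set.mem_iInter₂.1 h1 U hU
    exact ⟨x, hxG, hC3 U hU hxC⟩
  refine ⟨Subtype.val ⁻¹' T, ?_, hTclosed.preimage hval, ?_⟩
  · exact Filter.mem_of_superset ((hNopen.preimage hval).mem_nhds hAN)
      (Set.preimage_mono hNT)
  · exact (Set.preimage_mono (hTb.trans hbsub)).trans hts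

theorem fellCL_t0 : T0Space (FellHyper X (CL X)) := by
  letI : TopologicalSpace (Set X) := fellTopology X
  have hval : Continuous (Subtype.val : FellHyper X (CL X) → Set X) := continuous_induced_dom
  refine (t0Space_iff_exists_isOpen_xor'_mem _).2 ?_
  intro A B hAB
  have hne : (A.1 : Set X) ≠ B.1 := fun h => hAB (Subtype.ext h)
  have : ∃ x, (x ∈ (A.1 : Set X) ∧ x ∉ (B.1 : Set X)) ∨
      (x ∈ (B.1 : Set X) ∧ x ∉ (A.1 : Set X)) := by
    by_contra h
    push_neg at h
    exact hne (Set.ext fun x => ⟨(h x).1, (h x).2⟩)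
  obtain ⟨x, ⟨hx1, hx2⟩ | ⟨hx1, hx2⟩⟩ := this
  · refine ⟨Subtype.val ⁻¹' lminus ((B.1 : Set X)ᶜ),
      (fell_isOpen_lminus B.2.2.isOpen_compl).preimage hval, Or.inl ⟨⟨x, hx1, hx2⟩, ?_⟩⟩
    rintro ⟨y, hy1, hy2⟩
    exact hy2 hy1
  · refine ⟨Subtype.val ⁻¹' lminus ((A.1 : Set X)ᶜ),
      (fell_isOpen_lminus A.2.2.isOpen_compl).preimage hval, Or.inr ⟨⟨x, hx1, hx2⟩, ?_⟩⟩
    rintro ⟨y, hy1, hy2⟩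
    exact hy2 hy1

end Reg
section Fn2
variable {X : Type u} [TopologicalSpace X] [T1Space X] [RegularSpace X]

theorem singleton_mem_Fn2 (x : X) : ({x} : Set X) ∈ Fn X 2 := by
  refine ⟨Set.singleton_nonempty x, ?_⟩
  rw [Set.encard_singleton]
  exact one_le_two.trans_eq (by norm_num)

theorem pair_mem_Fn2 (x z : X) : ({x, z} : Set X) ∈ Fn X 2 := by
  refine ⟨⟨x, by simp⟩, ?_⟩
  calc ({x, z} : Set X).encard ≤ ({z} : Set X).encard + 1 := Set.encard_insert_le _ _
  _ = 2 := by rw [Set.encard_singleton]; norm_num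
  _ = ((2 : ℕ) : ℕ∞) := by norm_num

/-- The singleton embedding into the Fell hyperspace of at-most-2-point sets. -/
def jmap (x : X) : FellHyper X (Fn X 2) := ⟨{x}, singleton_mem_Fn2 x⟩

omit [T1Space X] [RegularSpace X] in
theorem sing_preimage_lminus (U : Set X) :
    (fun x : X => ({x} : Set X)) ⁻¹' lminus U = U := by
  ext x; simp [lminus, Set.singleton_inter_nonempty]

omit [T1Space X] [RegularSpace X] in
theorem sing_preimage_uplus (K : Set X) :
    (fun x : X => ({x} : Set X)) ⁻¹' uplus K = Kᶜ := by
  ext x; simp [uplus]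

theorem jmap_inducing : Topology.IsInducing (jmap (X := X)) := by
  haveI : T3Space X := ⟨⟩
  constructor
  show ‹TopologicalSpace X› = TopologicalSpace.induced _ (TopologicalSpace.induced _ _)
  erw [induced_compose]
  show ‹TopologicalSpace X› = TopologicalSpace.induced (fun x : X => ({x} : Set X)) (fellTopology X)
  rw [fellTopology_eq, induced_generateFrom_eq]
  refine le_antisymm (le_generateFrom ?_) ?_
  · rintro _ ⟨S, ⟨U, hU, rfl⟩ | ⟨K, hK, rfl⟩, rfl⟩
    · show IsOpen ((fun x : X => ({x} : Set X)) ⁻¹' lminus U)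
      rw [sing_preimage_lminus]; exact hU
    · show IsOpen ((fun x : X => ({x} : Set X))⁻¹' uplus K)
      rw [sing_preimage_uplus]; exact hK.isClosed.isOpen_compl
  · intro S hS
    refine TopologicalSpace.GenerateOpen.basic _ ⟨lminus S, Or.inl ⟨S, hS, rfl⟩, ?_⟩
    exact sing_preimage_lminus S

theorem isD0Space_X (h : IsD0Space (FellHyper X (Fn X 2))) : IsD0Space X :=
  h.of_inducing jmap_inducing

omit [T1Space X] [RegularSpace X] in
theorem fellHyper_isOpen_preimage {S : Set (Set X)} {t : Set (Set X)}
    (ht : IsOpen[fellTopology X] t) :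
    @IsOpen (FellHyper X S) (FellHyper.instTopologicalSpace X S) (Subtype.val ⁻¹' t) := by
  letI : TopologicalSpace (Set X) := fellTopology X
  exact ht.preimage continuous_induced_dom

/-- The canonical countable neighborhood data at a singleton `{x}` coming from `D₀`-ness of the
Fell hyperspace of at-most-2-point sets. -/
theorem exists_singleton_base (h : IsD0Space (FellHyper X (Fn X 2))) (x : X) :
    ∃ W K : ℕ → Set X,
      (∀ n, IsOpen (W n) ∧ x ∈ W n ∧ IsCompact (K n) ∧ x ∉ K n) ∧
      (∀ V : Set X, IsOpen V → x ∈ V → ∃ n, W n \ K n ⊆ V) ∧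
      (∀ L : Set X, IsCompact L → x ∉ L → ∃ n, L ⊆ K n) := by
  letI : TopologicalSpace (Set X) := fellTopology X
  obtain ⟨B, hB1, hB2⟩ := h {jmap x} (Set.singleton_nonempty _) isCompact_singleton
  have hmem : ∀ n, B n ∈ 𝓝 (jmap x) := fun n =>
    (hB1 n).1.mem_nhds ((hB1 n).2 (Set.mem_singleton _))
  have hdata : ∀ n, ∃ (I : Set (Set X)) (K : Set X), I.Finite ∧
      (∀ U ∈ I, IsOpen U ∧ x ∈ U) ∧ IsCompact K ∧ x ∉ K ∧
      (Subtype.val ⁻¹' fellBasic I K : Set (FellHyper X (Fn X 2))) ⊆ B n := by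
    intro n
    have := hmem n
    rw [nhds_induced] at this
    obtain ⟨t, ht, hsub⟩ := this
    obtain ⟨I, K, hIfin, hIprop, hKc, hK, hbsub⟩ := fell_mem_nhds ht
    refine ⟨I, K, hIfin, fun U hU => ⟨(hIprop U hU).1, ?_⟩, hKc, fun hxK => hK rfl hxK, ?_⟩
    · obtain ⟨y, hy, hyU⟩ := (hIprop U hU).2
      rwa [Set.mem_singleton_iff.1 hy] at hyU
    · exact fun A hA => hsub (hbsub hA)
  choose I K hIfin hIprop hKc hxK hsub using hdata
  refine ⟨fun n => ⋂₀ I n, K, fun n => ⟨?_, ?_, hKc n, hxK n⟩, ?_, ?_⟩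
  · exact Set.Finite.isOpen_sInter (hIfin n) (fun U hU => (hIprop n U hU).1)
  · exact Set.mem_sInter.2 fun U hU => (hIprop n U hU).2
  · intro V hV hxV
    have hopen : IsOpen (Subtype.val ⁻¹' lminus V : Set (FellHyper X (Fn X 2))) :=
      fellHyper_isOpen_preimage (fell_isOpen_lminus hV)
    obtain ⟨n, hn⟩ := hB2 _ hopen (by
      rintro A rfl
      exact ⟨x, rfl, hxV⟩)
    refine ⟨n, fun y hy => ?_⟩
    have : (⟨{y}, singleton_mem_Fn2 y⟩ : FellHyper X (Fn X 2)) ∈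
        Subtype.val ⁻¹' fellBasic (I n) (K n) := by
      refine ⟨fun U hU => ⟨y, rfl, Set.mem_sInter.1 hy.1 U hU⟩, ?_⟩
      intro z hz
      rw [Set.mem_singleton_iff.1 hz]
      exact hy.2
    obtain ⟨z, hz1, hz2⟩ := hn (hsub n this)
    rwa [Set.mem_singleton_iff.1 hz1] at hz2
  · intro L hLc hxL
    have hopen : IsOpen (Subtype.val ⁻¹' uplus L : Set (FellHyper X (Fn X 2))) :=
      fellHyper_isOpen_preimage (fell_isOpen_uplus hLc)
    obtain ⟨n, hn⟩ := hB2 _ hopen (by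
      rintro A rfl z hz
      rw [Set.mem_singleton_iff.1 hz]
      exact hxL)
    refine ⟨n, fun z hzL => ?_⟩
    by_contra hzK
    have : (⟨{x, z}, pair_mem_Fn2 x z⟩ : FellHyper X (Fn X 2)) ∈
        Subtype.val ⁻¹' fellBasic (I n) (K n) := by
      refine ⟨fun U hU => ⟨x, Set.mem_insert _ _, Set.mem_sInter.1 ?_ U hU⟩, ?_⟩
      · exact Set.mem_sInter.2 fun U' hU' => (hIprop n U' hU').2
      · rintro w (rfl | hw)
        · exact hxK n
        · rw [Set.mem_singleton_iff.1 hw]; exact hzK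
    exact hn (hsub n this) (Set.mem_insert_iff.2 (Or.inr rfl)) hzL

end Fn2
section LC
variable {X : Type u} [TopologicalSpace X] [T1Space X] [RegularSpace X]

/-- A decreasing countable open neighborhood base extracted from the singleton data. -/
theorem exists_decreasing_base (h : IsD0Space (FellHyper X (Fn X 2))) (y : X) :
    ∃ V : ℕ → Set X, (∀ n, IsOpen (V n) ∧ y ∈ V n) ∧ (∀ m n, m ≤ n → V n ⊆ V m) ∧
      (∀ W : Set X, IsOpen W → y ∈ W → ∃ n, V n ⊆ W) := by
  haveI : T3Space X := ⟨⟩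
  obtain ⟨W, K, hWK, hbase, -⟩ := exists_singleton_base h y
  refine ⟨fun n => ⋂ i ∈ Finset.range (n + 1), (W i \ K i), fun n => ⟨?_, ?_⟩, ?_, ?_⟩
  · exact isOpen_biInter_finset fun i _ => (hWK i).1.sdiff (hWK i).2.2.1.isClosed
  · exact Set.mem_iInter₂.2 fun i _ => ⟨(hWK i).2.1, (hWK i).2.2.2⟩
  · intro m n hmn z hz
    exact Set.mem_iInter₂.2 fun i hi => Set.mem_iInter₂.1 hz i
      (Finset.mem_range_succ_iff.2 ((Finset.mem_range_succ_iff.1 hi).trans hmn))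
  · intro V hV hyV
    obtain ⟨n, hn⟩ := hbase V hV hyV
    exact ⟨n, fun z hz => hn ⟨(Set.mem_iInter₂.1 hz n (Finset.self_mem_range_succ n)).1,
      (Set.mem_iInter₂.1 hz n (Finset.self_mem_range_succ n)).2⟩⟩

theorem weaklyLocallyCompact_of_Fn2 (h : IsD0Space (FellHyper X (Fn X 2))) :
    WeaklyLocallyCompactSpace X := by
  haveI : T3Space X := ⟨⟩
  constructor
  intro y
  by_cases hsub : ∀ x : X, x = y
  · refine ⟨Set.univ, ?_, Filter.univ_mem⟩
    have : (Set.univ : Set X) ⊆ {y} := fun x _ => hsub x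
    exact ((Set.finite_singleton y).subset this).isCompact
  · push_neg at hsub
    obtain ⟨x, hxy⟩ := hsub
    obtain ⟨V, hV, hVdec, hVbase⟩ := exists_decreasing_base h y
    obtain ⟨W', K, hWK, -, hdom⟩ := exists_singleton_base h x
    by_cases hcase : ∃ n m, V n \ {x} ⊆ K m
    · obtain ⟨n, m, hnm⟩ := hcase
      refine ⟨closure (V n \ {x}), ?_, ?_⟩
      · exact (hWK m).2.2.1.of_isClosed_subset isClosed_closure
          (closure_minimal hnm (hWK m).2.2.1.isClosed)
      · refine Filter.mem_of_superset ?_ subset_closure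
        exact (((hV n).1.sdiff isClosed_singleton)).mem_nhds ⟨(hV n).2, by simpa using hxy.symm⟩
    · push_neg at hcase
      exfalso
      have hz : ∀ n, ∃ z, z ∈ V n ∧ z ≠ x ∧ z ∉ K n := by
        intro n
        obtain ⟨z, hz1, hz2⟩ := Set.not_subset.1 (hcase n n)
        exact ⟨z, hz1.1, by simpa using hz1.2, hz2⟩
      choose z hz1 hz2 hz3 using hz
      have htend : Filter.Tendsto z Filter.atTop (nhds y) := by
        rw [tendsto_atTop_nhds]
        intro U hyU hU
        obtain ⟨n, hn⟩ := hVbase U hU hyU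
        exact ⟨n, fun m hm => hn (hVdec n m hm (hz1 m))⟩
      have hS : IsCompact (insert y (Set.range z)) := htend.isCompact_insert_range
      have hxS : x ∉ insert y (Set.range z) := by
        rintro (rfl | ⟨n, rfl⟩)
        · exact hxy rfl
        · exact hz2 n rfl
      obtain ⟨m, hm⟩ := hdom _ hS hxS
      exact hz3 m (hm (Set.mem_insert_iff.2 (Or.inr ⟨m, rfl⟩)))

theorem sigmaCompact_of_Fn2 (h : IsD0Space (FellHyper X (Fn X 2))) :
    SigmaCompactSpace X := by
  haveI : T3Space X := ⟨⟩
  rcases isEmpty_or_nonempty X with hX | hX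
  · exact ⟨⟨fun _ => ∅, fun _ => isCompact_empty, by simp [Set.univ_eq_empty_iff.2 hX]⟩⟩
  · obtain ⟨x₀⟩ := hX
    obtain ⟨W', K, hWK, -, hdom⟩ := exists_singleton_base h x₀
    refine ⟨⟨fun n => insert x₀ (K n), fun n => ((hWK n).2.2.1).insert x₀, ?_⟩⟩
    rw [Set.iUnion_eq_univ_iff]
    intro y
    by_cases hy : y = x₀
    · exact ⟨0, Or.inl hy⟩
    · obtain ⟨n, hn⟩ := hdom {y} isCompact_singleton (by simpa using Ne.symm hy)
      exact ⟨n, Or.inr (hn rfl)⟩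

end LC
open Uniformity
section CompactSub
variable {X : Type u} [TopologicalSpace X] [T1Space X] [RegularSpace X]

/-- The pairing map into the Fell hyperspace of at-most-2-point sets. -/
def qmap (p : X × X) : FellHyper X (Fn X 2) := ⟨{p.1, p.2}, pair_mem_Fn2 p.1 p.2⟩

theorem qmap_continuous : Continuous (qmap (X := X)) := by
  haveI : T3Space X := ⟨⟩
  have key : @Continuous (X × X) (Set X) _ (fellTopology X) (fun p => ({p.1, p.2} : Set X)) := by
    rw [fellTopology_eq, continuous_iff_coinduced_le, le_generateFrom_iff_subset_isOpen]
    rintro S (⟨U, hU, rfl⟩ | ⟨K, hK, rfl⟩)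
    · show IsOpen ((fun p : X × X => ({p.1, p.2} : Set X)) ⁻¹' {H | (H ∩ U).Nonempty})
      have : (fun p : X × X => ({p.1, p.2} : Set X)) ⁻¹' {H | (H ∩ U).Nonempty} =
          (U ×ˢ (Set.univ : Set X)) ∪ ((Set.univ : Set X) ×ˢ U) := by
        ext ⟨a, b⟩
        simp only [Set.mem_preimage, Set.mem_setOf_eq, Set.mem_union, Set.mem_prod,
          Set.mem_univ, and_true, true_and]
        constructor
        · rintro ⟨w, (rfl | hw), hwU⟩
          · exact Or.inl hwU
          · rw [Set.mem_singleton_iff.1 hw] at hwU; exact Or.inr hwU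
        · rintro (ha | hb)
          · exact ⟨a, Set.mem_insert _ _, ha⟩
          · exact ⟨b, Set.mem_insert_iff.2 (Or.inr rfl), hb⟩
      rw [this]
      exact (hU.prod isOpen_univ).union (isOpen_univ.prod hU)
    · show IsOpen ((fun p : X × X => ({p.1, p.2} : Set X)) ⁻¹' {H | H ⊆ Kᶜ})
      have : (fun p : X × X => ({p.1, p.2} : Set X)) ⁻¹' {H | H ⊆ Kᶜ} = Kᶜ ×ˢ Kᶜ := by
        ext ⟨a, b⟩
        simp only [Set.mem_preimage, Set.mem_setOf_eq, Set.mem_prod, Set.mem_compl_iff]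
        constructor
        · intro hs
          exact ⟨hs (Set.mem_insert _ _), hs (Set.mem_insert_iff.2 (Or.inr rfl))⟩
        · rintro ⟨ha, hb⟩ w (rfl | hw)
          · exact ha
          · rw [Set.mem_singleton_iff.1 hw]; exact hb
      rw [this]
      exact (hK.isClosed.isOpen_compl).prod hK.isClosed.isOpen_compl

  exact continuous_induced_rng.2 key
theorem compact_subspace_secondCountable (h : IsD0Space (FellHyper X (Fn X 2)))
    {C : Set X} (hC : IsCompact C) (hCne : C.Nonempty) :
    SecondCountableTopology ↥C := by
  haveI : T3Space X := ⟨⟩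
  classical
  have hSC : IsCompact (jmap '' C : Set (FellHyper X (Fn X 2))) :=
    hC.image jmap_inducing.continuous
  obtain ⟨B, hB1, hB2⟩ := h _ (hCne.image jmap) hSC
  set N : ℕ → Set (X × X) := fun m => qmap ⁻¹' (B m) with hNdef
  have hNopen : ∀ m, IsOpen (N m) := fun m => (hB1 m).1.preimage qmap_continuous
  have hqj : ∀ z : X, qmap (z, z) = jmap z := by
    intro z
    apply Subtype.ext
    show ({z, z} : Set X) = {z}
    exact Set.pair_eq_singleton z
  have hNdiag : ∀ m, ∀ z ∈ C, (z, z) ∈ N m := by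
    intro m z hz
    show qmap (z, z) ∈ B m
    rw [hqj]
    exact (hB1 m).2 (Set.mem_image_of_mem _ hz)
  have hcof : ∀ Nb : Set (X × X), IsOpen Nb → (∀ z ∈ C, (z, z) ∈ Nb) →
      ∃ m, ∀ z ∈ C, ∀ w ∈ C, (z, w) ∈ N m → (z, w) ∈ Nb := by
    intro Nb hNb hNbd
    have hbox : ∀ u ∈ C, ∃ Bu : Set X, IsOpen Bu ∧ u ∈ Bu ∧ Bu ×ˢ Bu ⊆ Nb := by
      intro u hu
      obtain ⟨u₁, u₂, h₁, h₂, hu₁, hu₂, hsub⟩ := isOpen_prod_iff.1 hNb u u (hNbd u hu)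
      exact ⟨u₁ ∩ u₂, h₁.inter h₂, ⟨hu₁, hu₂⟩, fun p hp => hsub ⟨hp.1.1, hp.2.2⟩⟩
    choose! Bu hBu1 hBu2 hBu3 using hbox
    letI : TopologicalSpace (Set X) := fellTopology X
    set O : Set (FellHyper X (Fn X 2)) :=
      ⋃ u ∈ C, Subtype.val ⁻¹' (lminus (Bu u) ∩ uplus (C \ Bu u)) with hO
    have hOopen : IsOpen O := by
      refine isOpen_biUnion fun u hu => ?_
      exact fellHyper_isOpen_preimage ((fell_isOpen_lminus (hBu1 u hu)).inter
        (fell_isOpen_uplus (hC.diff (hBu1 u hu))))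
    have hSO : jmap '' C ⊆ O := by
      rintro _ ⟨z, hz, rfl⟩
      refine Set.mem_biUnion hz ⟨⟨z, rfl, hBu2 z hz⟩, ?_⟩
      intro w hw
      rw [Set.mem_singleton_iff.1 hw]
      exact fun hmem => hmem.2 (hBu2 z hz)
    obtain ⟨m, hm⟩ := hB2 O hOopen hSO
    refine ⟨m, fun z hz w hw hzw => ?_⟩
    obtain ⟨u, hu, hmem⟩ := Set.mem_iUnion₂.1 (hm hzw)
    have h2 : ({z, w} : Set X) ⊆ (C \ Bu u)ᶜ := hmem.2
    have hzB : z ∈ Bu u := by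
      by_contra hzB
      exact h2 (Set.mem_insert _ _) ⟨hz, hzB⟩
    have hwB : w ∈ Bu u := by
      by_contra hwB
      exact h2 (Set.mem_insert_iff.2 (Or.inr rfl)) ⟨hw, hwB⟩
    exact hBu3 u hu ⟨hzB, hwB⟩
  haveI : CompactSpace ↥C := isCompact_iff_compactSpace.1 hC
  letI uC : UniformSpace ↥C := uniformSpaceOfCompactR1
  have huni : 𝓤 ↥C = nhdsSet (Set.diagonal ↥C) := rfl
  set N' : ℕ → Set (↥C × ↥C) := fun m => (Prod.map Subtype.val Subtype.val) ⁻¹' (N m) with hN'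
  have hval2 : Continuous (Prod.map (Subtype.val : ↥C → X) Subtype.val) :=
    (continuous_subtype_val : Continuous ((↑) : ↥C → X)).prodMap
      (continuous_subtype_val : Continuous ((↑) : ↥C → X))
  have hbasis : (𝓤 ↥C).HasBasis (fun _ : ℕ => True) N' := by
    rw [huni]
    refine ⟨fun s => ⟨?_, ?_⟩⟩
    · intro hs
      obtain ⟨Ob, ⟨hOb, hdOb⟩, hObs⟩ := (hasBasis_nhdsSet _).mem_iff.1 hs
      obtain ⟨Nb, hNb, hNbeq⟩ :=
        (Topology.IsInducing.subtypeVal.prodMap Topology.IsInducing.subtypeVal).isOpen_iff.1 hOb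
      have hNbd : ∀ z ∈ C, (z, z) ∈ Nb := by
        intro z hz
        have : (⟨z, hz⟩, ⟨z, hz⟩) ∈ Ob := hdOb rfl
        rw [← hNbeq] at this
        exact this
      obtain ⟨m, hmm⟩ := hcof Nb hNb hNbd
      refine ⟨m, trivial, fun p hp => hObs ?_⟩
      rw [← hNbeq]
      exact hmm p.1.1 p.1.2 p.2.1 p.2.2 hp
    · rintro ⟨m, -, hsub⟩
      refine Filter.mem_of_superset ?_ hsub
      refine ((hNopen m).preimage hval2).mem_nhdsSet.2 ?_
      rintro ⟨⟨a, ha⟩, ⟨b, hb⟩⟩ hab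
      have hab' : a = b := congrArg Subtype.val hab
      show (a, b) ∈ N m
      rw [hab']
      exact hNdiag m b hb
  haveI : (𝓤 ↥C).IsCountablyGenerated := hbasis.isCountablyGenerated
  haveI : TopologicalSpace.PseudoMetrizableSpace ↥C := UniformSpace.pseudoMetrizableSpace
  letI : PseudoMetricSpace ↥C := TopologicalSpace.pseudoMetrizableSpacePseudoMetric ↥C
  haveI : TopologicalSpace.SeparableSpace ↥C := by
    rw [← TopologicalSpace.isSeparable_univ_iff]
    exact isCompact_univ.isSeparable
  exact UniformSpace.secondCountable_of_separable ↥C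

end CompactSub
section Main
variable (X : Type u) [TopologicalSpace X] [T1Space X] [RegularSpace X]

theorem fell_CL_metrizable (h : LocallyCompactSpace X ∧ TopologicalSpace.SeparableSpace X ∧
    TopologicalSpace.MetrizableSpace X) :
    TopologicalSpace.MetrizableSpace (FellHyper X (CL X)) := by
  obtain ⟨hLC, hSep, hMet⟩ := h
  haveI := hLC; haveI := hSep; haveI := hMet
  haveI : SecondCountableTopology X := by
    letI : MetricSpace X := TopologicalSpace.metrizableSpaceMetric X
    exact UniformSpace.secondCountable_of_separable X
  haveI := fellCL_secondCountable (X := X)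
  haveI := fellCL_regular (X := X)
  haveI := fellCL_t0 (X := X)
  haveI : T3Space (FellHyper X (CL X)) := ⟨⟩
  infer_instance

theorem of_Fn2_D0 (h : IsD0Space (FellHyper X (Fn X 2))) :
    LocallyCompactSpace X ∧ TopologicalSpace.SeparableSpace X ∧
      TopologicalSpace.MetrizableSpace X := by
  haveI : T3Space X := ⟨⟩
  haveI : WeaklyLocallyCompactSpace X := weaklyLocallyCompact_of_Fn2 h
  haveI : LocallyCompactSpace X := inferInstance
  haveI : SigmaCompactSpace X := sigmaCompact_of_Fn2 h
  haveI : SecondCountableTopology X := by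
    rcases isEmpty_or_nonempty X with hX | hX
    · haveI : ∀ i : Empty, SecondCountableTopology ((fun _ : Empty => (∅ : Set X)) i) :=
        fun i => i.elim
      exact secondCountableTopology_of_countable_cover (U := fun _ : Empty => (∅ : Set X))
        (fun i => i.elim) (Set.eq_univ_of_forall fun x => (hX.false x).elim)
    · obtain ⟨x₀⟩ := hX
      let K := CompactExhaustion.choice X
      haveI h2nd : ∀ n, SecondCountableTopology ↥(insert x₀ (K n)) := fun n =>
        compact_subspace_secondCountable h ((K.isCompact n).insert x₀)
          (Set.insert_nonempty _ _)
      haveI : ∀ n, SecondCountableTopology ↥(interior (insert x₀ (K n))) := fun n =>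
        (Topology.IsEmbedding.inclusion interior_subset).secondCountableTopology
      refine secondCountableTopology_of_countable_cover
        (U := fun n => interior (insert x₀ (K n))) (fun n => isOpen_interior) ?_
      refine Set.eq_univ_of_forall fun x => ?_
      obtain ⟨n, hn⟩ := K.exists_mem x
      refine Set.mem_iUnion.2 ⟨n + 1, ?_⟩
      exact interior_mono (Set.subset_insert _ _) (K.subset_interior_succ n hn)
  exact ⟨inferInstance, inferInstance, inferInstance⟩

end Main

/-- characterization of spaces whose Fell hyperspaces are `D₀`-spaces. -/
theorem statement12 (X : Type u) [TopologicalSpace X] [T1Space X] [RegularSpace X] :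
    List.TFAE
      [TopologicalSpace.MetrizableSpace (FellHyper X (CL X)),
       IsGammaSpace (FellHyper X (CL X)),
       IsD0Space (FellHyper X (CL X)),
       IsD0Space (FellHyper X (Kcal X)),
       IsD0Space (FellHyper X (Fcal X)),
       IsD0Space (FellHyper X (Fn X 2)),
       LocallyCompactSpace X ∧ TopologicalSpace.SeparableSpace X ∧
         TopologicalSpace.MetrizableSpace X] := by
  haveI : T3Space X := ⟨⟩
  tfae_have 1 → 2 := fun h => @isGammaSpace_of_metrizable _ _ h
  tfae_have 2 → 3 := IsGammaSpace.isD0Space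
  tfae_have 3 → 4 := IsD0Space.fellHyper_mono Kcal_subset_CL
  tfae_have 4 → 5 := IsD0Space.fellHyper_mono Fcal_subset_Kcal
  tfae_have 5 → 6 := IsD0Space.fellHyper_mono Fn2_subset_Fcal
  tfae_have 6 → 7 := of_Fn2_D0 X
  tfae_have 7 → 1 := fell_CL_metrizable X
  tfae_finish
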